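/- If Q and V satisfy the soft Bellman optimality equations, then for every complete trajectory τ = (s_0, s_1, …, s_T, s_f): ∏_{t=0}^{T} π*(s_{t+1}|s_t) = exp((Σ_{t=0}^{T} r(s_t, s_{t+1}) − V(s_0))/α). In particular, the probability that the optimal policy generates a complete trajectory τ is proportional to exp(Σ_{t=0}^{T} r(s_t, s_{t+1})/α). -/
import Mathlib


/-- Product of `f` over consecutive pairs of a list:
for `l = [v₀, …, v_k]`, `pairProd f l = ∏_{t=0}^{k-1} f v_t v_{t+1}`. -/
def pairProd {V : Type*} (f : V → V → ℝ) (l : List V) : ℝ :=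
  ((l.zip l.tail).map (fun p => f p.1 p.2)).prod

/-- Sum of `f` over consecutive pairs of a list. -/
def pairSum {V : Type*} (f : V → V → ℝ) (l : List V) : ℝ :=
  ((l.zip l.tail).map (fun p => f p.1 p.2)).sum

/-- `l` is a directed path from `a` to `b` in the graph with edge relation `E`. -/
def IsPath {V : Type*} (E : V → V → Prop) (a b : V) (l : List V) : Prop :=
  l.Chain' E ∧ l.head? = some a ∧ l.getLast? = some b

private lemma pairProd_key {V : Type*} (E : V → V → Prop) (α : ℝ)
    (r : V → V → ℝ) (Q : V → V → ℝ) (Vf : V → ℝ)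
    (hQ : ∀ s s' : V, E s s' → Q s s' = r s s' + Vf s') :
    ∀ (l : List V) (a b : V), l.Chain' E → l.head? = some a → l.getLast? = some b →
      pairProd (fun s s' => Real.exp ((Q s s' - Vf s) / α)) l
        = Real.exp ((pairSum r l + Vf b - Vf a) / α) := by
  intro l
  induction l with
  | nil => intro a b _ h; simp at h
  | cons x tl ih =>
    intro a b hch hhd hlast
    simp at hhd; subst hhd
    cases tl with
    | nil =>
      simp [List.getLast?] at hlast; subst hlast
      simp [pairProd, pairSum]
    | cons c rest =>
      have hch' : (c :: rest).Chain' E := hch.tail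
      have hE : E x c := (List.isChain_cons_cons.mp hch).1
      have hlast' : (c :: rest).getLast? = some b := by
        rwa [List.getLast?_cons_cons] at hlast
      have ihh := ih c b hch' rfl hlast'
      have hpp : pairProd (fun s s' => Real.exp ((Q s s' - Vf s) / α)) (x :: c :: rest)
          = Real.exp ((Q x c - Vf x) / α) *
            pairProd (fun s s' => Real.exp ((Q s s' - Vf s) / α)) (c :: rest) := by
        simp [pairProd]
      have hps : pairSum r (x :: c :: rest) = r x c + pairSum r (c :: rest) := by
        simp [pairSum]
      rw [hpp, ihh, hps, ← Real.exp_add, hQ x c hE]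
      ring_nf

/-- If `Q` and `V` satisfy the soft Bellman optimality equations, then for
every complete trajectory `τ = (s₀, …, s_T, s_f)` the probability of `τ` under the optimal
policy `π*(s'|s) = exp((Q(s,s') - V(s))/α)` equals `exp((Σ_t r(s_t,s_{t+1}) - V(s₀))/α)`;
in particular it is proportional to the exponentiated return. -/
theorem optimal_policy_trajectory_probability
    {V : Type*} [Fintype V] [DecidableEq V]
    (E : V → V → Prop) [DecidableRel E] (s0 sf : V)
    (hacyc : ∀ v : V, ¬ Relation.TransGen E v v)
    (hsink : ∀ v : V, ¬ E sf v)
    (hreach : ∀ v : V, Relation.ReflTransGen E s0 v)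
    (hnoin : ∀ v : V, ¬ E v s0)
    (hs0f : s0 ≠ sf)
    (α : ℝ) (hα : 0 < α)
    (r : V → V → ℝ)
    (Q : V → V → ℝ) (Vf : V → ℝ)
    (hQ : ∀ s s' : V, E s s' → Q s s' = r s s' + Vf s')
    (hV : ∀ s : V, s ≠ sf →
      Vf s = α * Real.log (∑ t ∈ Finset.univ.filter (fun t => E s t), Real.exp (Q s t / α)))
    (hVsf : Vf sf = 0) :
    ∀ l : List V, IsPath E s0 sf l →
      pairProd (fun s s' => Real.exp ((Q s s' - Vf s) / α)) l
        = Real.exp ((pairSum r l - Vf s0) / α) := by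
  rintro l ⟨hch, hhd, hlast⟩
  rw [pairProd_key E α r Q Vf hQ l s0 sf hch hhd hlast, hVsf]
  ring_nf
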